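/- Suppose the steplengths γ_{f,k} are nonnegative and diminishing with Σ_k γ_{f,k} = ∞ and Σ_k γ_{f,k}² < ∞, and γ_{g,k} ≡ γ_g is constant with 0 < γ_g < 2/G_g. Then the sequence (x_k, θ_k) generated by the joint gradient scheme satisfies: x_k converges to a point of X* and θ_k → θ* as k → ∞. -/

import Mathlib

open Filter Topology RealInnerProductSpace

set_option maxHeartbeats 1000000

set_option linter.unusedSectionVars false
set_option maxHeartbeats 1000000

section AuxJGS

variable {F : Type*} [NormedAddCommGroup F] [InnerProductSpace ℝ F] [CompleteSpace F]

/-- Variational inequality for a nearest-point map onto a convex set. -/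
lemma projVI_jgs {S : Set F} (hS : Convex ℝ S) {P : F → F}
    (hP : ∀ y, P y ∈ S ∧ ∀ z ∈ S, ‖y - P y‖ ≤ ‖y - z‖) (y : F) :
    ∀ w ∈ S, ⟪y - P y, w - P y⟫ ≤ 0 := by
  have hmem := (hP y).1
  have : ‖y - P y‖ = ⨅ w : S, ‖y - w‖ := by
    haveI : Nonempty S := ⟨⟨P y, hmem⟩⟩
    apply le_antisymm
    · exact le_ciInf fun w => (hP y).2 w w.2
    · have hbdd : BddBelow (Set.range fun w : S => ‖y - (w:F)‖) := by
        refine ⟨0, ?_⟩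
        rintro r ⟨w, rfl⟩
        exact norm_nonneg _
      exact ciInf_le hbdd ⟨P y, hmem⟩
  exact (norm_eq_iInf_iff_real_inner_le_zero hS hmem).1 this

lemma proj_sq_le_jgs {S : Set F} (hS : Convex ℝ S) {P : F → F}
    (hP : ∀ y, P y ∈ S ∧ ∀ z ∈ S, ‖y - P y‖ ≤ ‖y - z‖) (y : F) {z : F} (hz : z ∈ S) :
    ‖P y - z‖ ^ 2 ≤ ‖y - z‖ ^ 2 := by
  have hVI := projVI_jgs hS hP y z hz
  have hexp : ‖y - z‖ ^ 2 = ‖y - P y‖ ^ 2 + 2 * ⟪y - P y, P y - z⟫ + ‖P y - z‖ ^ 2 := by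
    have : y - z = (y - P y) + (P y - z) := by abel
    rw [this, norm_add_sq_real]
  have h2 : (0:ℝ) ≤ ⟪y - P y, P y - z⟫ := by
    have hneg : ⟪y - P y, P y - z⟫ = -⟪y - P y, z - P y⟫ := by
      rw [← inner_neg_right]; congr 1; abel
    linarith [hVI, hneg.ge, hneg.le]
  nlinarith [sq_nonneg ‖y - P y‖]

lemma hasDerivAt_line_jgs {f : F → ℝ} {G : F} {x v : F} {t₀ : ℝ}
    (h : HasGradientAt f G (x + t₀ • v)) :
    HasDerivAt (fun t : ℝ => f (x + t • v)) ⟪G, v⟫ t₀ := by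
  have hline : HasDerivAt (fun t : ℝ => x + t • v) v t₀ := by
    simpa using ((hasDerivAt_id t₀).smul_const v).const_add x
  have := (h.hasFDerivAt).comp_hasDerivAt t₀ hline
  exact this

lemma slope_tendsto_right_jgs {φ : ℝ → ℝ} {d : ℝ} (hd : HasDerivAt φ d 0) :
    Tendsto (fun t : ℝ => (φ t - φ 0) / t) (𝓝[>] 0) (𝓝 d) := by
  have h := hasDerivAt_iff_tendsto_slope.1 hd
  have h2 : Tendsto (slope φ 0) (𝓝[>] 0) (𝓝 d) :=
    h.mono_left (nhdsWithin_mono 0 fun t ht => ne_of_gt ht)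
  refine h2.congr fun t => ?_
  simp [slope_def_field, div_eq_inv_mul]

/-- Gradient inequality for convex functions. -/
lemma convex_grad_ineq_jgs {s : Set F} {f : F → ℝ} (hf : ConvexOn ℝ s f)
    {x z G : F} (hx : x ∈ s) (hz : z ∈ s) (hG : HasGradientAt f G x) :
    f x + ⟪G, z - x⟫ ≤ f z := by
  have hd : HasDerivAt (fun t : ℝ => f (x + t • (z - x))) ⟪G, z - x⟫ 0 := by
    apply hasDerivAt_line_jgs; simpa using hG
  have hslope := slope_tendsto_right_jgs hd
  have hbound : ∀ᶠ t in 𝓝[>] (0:ℝ),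
      (f (x + t • (z - x)) - f (x + (0:ℝ) • (z - x))) / t ≤ f z - f x := by
    filter_upwards [Ioo_mem_nhdsGT_of_mem (Set.mem_Ico.2 ⟨le_refl (0:ℝ), zero_lt_one⟩)]
      with t ht
    have ht0 : 0 < t := ht.1
    have ht1 : t < 1 := ht.2
    have hmem : x + t • (z - x) = (1 - t) • x + t • z := by
      rw [sub_smul, smul_sub, one_smul]; abel
    have hcvx := hf.2 hx hz (by linarith : (0:ℝ) ≤ 1 - t) ht0.le (by ring)
    simp only [zero_smul, add_zero]
    rw [hmem]
    rw [div_le_iff₀ ht0]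
    simp only [smul_eq_mul] at hcvx
    nlinarith
  have := le_of_tendsto hslope (by simpa using hbound)
  linarith

/-- First-order optimality condition. -/
lemma min_VI_jgs {s : Set F} (hs : Convex ℝ s) {g : F → ℝ} {a G : F}
    (ha : a ∈ s) (hmin : ∀ w ∈ s, g a ≤ g w) (hG : HasGradientAt g G a) :
    ∀ w ∈ s, 0 ≤ ⟪G, w - a⟫ := by
  intro w hw
  have hd : HasDerivAt (fun t : ℝ => g (a + t • (w - a))) ⟪G, w - a⟫ 0 := by
    apply hasDerivAt_line_jgs; simpa using hG
  have hslope := slope_tendsto_right_jgs hd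
  have hbound : ∀ᶠ t in 𝓝[>] (0:ℝ),
      (0:ℝ) ≤ (g (a + t • (w - a)) - g (a + (0:ℝ) • (w - a))) / t := by
    filter_upwards [Ioo_mem_nhdsGT_of_mem (Set.mem_Ico.2 ⟨le_refl (0:ℝ), zero_lt_one⟩)]
      with t ht
    have hmem : a + t • (w - a) ∈ s := by
      have : a + t • (w - a) = (1 - t) • a + t • w := by
        rw [sub_smul, smul_sub, one_smul]; abel
      rw [this]
      exact hs ha hw (by linarith [ht.2] : (0:ℝ) ≤ 1 - t) ht.1.le (by ring)
    have := hmin _ hmem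
    simp only [zero_smul, add_zero]
    exact div_nonneg (by linarith) ht.1.le
  exact ge_of_tendsto hslope (by simpa using hbound)

lemma hasGradientAt_normsq_jgs (a : F) :
    HasGradientAt (fun y : F => ‖y‖ ^ 2) ((2:ℝ) • a) a := by
  have h : HasFDerivAt (fun y : F => ⟪y, y⟫) (2 • (innerSL ℝ a)) a := by
    have := (hasFDerivAt_id (𝕜 := ℝ) a).inner ℝ (hasFDerivAt_id a)
    refine HasFDerivAt.congr_fderiv this ?_
    ext v
    simp [two_smul, real_inner_comm]
  rw [hasGradientAt_iff_hasFDerivAt]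
  have heq : (InnerProductSpace.toDual ℝ F) ((2:ℝ) • a) = 2 • innerSL ℝ a := by
    ext v
    simp [InnerProductSpace.toDual_apply_apply, real_inner_smul_left, two_smul]
  rw [heq]
  exact h.congr_of_eventuallyEq (by filter_upwards with y; rw [← real_inner_self_eq_norm_sq])

lemma hasGradientAt_sub_smul_normsq_jgs {g : F → ℝ} {G a : F} (η : ℝ)
    (hG : HasGradientAt g G a) :
    HasGradientAt (fun y => g y - η / 2 * ‖y‖ ^ 2) (G - η • a) a := by
  have h1 := hG.hasFDerivAt
  have h2 := ((hasGradientAt_normsq_jgs a).hasFDerivAt).const_mul (η / 2)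
  have h3 := h1.sub h2
  rw [hasGradientAt_iff_hasFDerivAt]
  refine HasFDerivAt.congr_fderiv h3 ?_
  ext v
  simp [InnerProductSpace.toDual_apply_apply, inner_sub_left, real_inner_smul_left]
  ring

lemma strong_grad_ineq_jgs {s : Set F} {g : F → ℝ} {η : ℝ} (hg : StrongConvexOn s η g)
    {a b G : F} (ha : a ∈ s) (hb : b ∈ s) (hG : HasGradientAt g G a) :
    g a + ⟪G, b - a⟫ + η / 2 * ‖b - a‖ ^ 2 ≤ g b := by
  have hconv : ConvexOn ℝ s (fun y => g y - η / 2 * ‖y‖ ^ 2) :=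
    strongConvexOn_iff_convex.1 hg
  have := convex_grad_ineq_jgs hconv ha hb (hasGradientAt_sub_smul_normsq_jgs η hG)
  have hinner : ⟪G - η • a, b - a⟫ = ⟪G, b - a⟫ - η * ⟪a, b - a⟫ := by
    rw [inner_sub_left, real_inner_smul_left]
  have hsq : ‖b - a‖ ^ 2 = ‖b‖ ^ 2 - 2 * ⟪a, b - a⟫ - ‖a‖ ^ 2 := by
    rw [norm_sub_sq_real, inner_sub_right, real_inner_self_eq_norm_sq,
      real_inner_comm]
    ring
  rw [hinner] at this
  rw [hsq]
  linarith [this]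

/-- Gradient monotonicity from strong convexity. -/
lemma strong_mono_jgs {s : Set F} {g : F → ℝ} {η : ℝ} (hg : StrongConvexOn s η g)
    {a b Ga Gb : F} (ha : a ∈ s) (hb : b ∈ s)
    (hGa : HasGradientAt g Ga a) (hGb : HasGradientAt g Gb b) :
    η * ‖a - b‖ ^ 2 ≤ ⟪Ga - Gb, a - b⟫ := by
  have h1 := strong_grad_ineq_jgs hg ha hb hGa
  have h2 := strong_grad_ineq_jgs hg hb ha hGb
  have e2 : ⟪Ga, b - a⟫ = -⟪Ga, a - b⟫ := by
    rw [← inner_neg_right]; congr 1; abel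
  rw [show ‖b - a‖ = ‖a - b‖ from norm_sub_rev b a] at h1
  rw [inner_sub_left]
  linarith [h1, h2, e2]

/-- The descent lemma for functions with Lipschitz gradients. -/
lemma descent_lemma_jgs {g : F → ℝ} {Gr : F → F} (hG : ∀ y, HasGradientAt g (Gr y) y)
    (hGc : Continuous Gr) {L : ℝ} (hL : ∀ p q, ‖Gr p - Gr q‖ ≤ L * ‖p - q‖) (a b : F) :
    g b ≤ g a + ⟪Gr a, b - a⟫ + L / 2 * ‖b - a‖ ^ 2 := by
  set v := b - a with hv
  have hψc : Continuous fun t : ℝ => ⟪Gr (a + t • v), v⟫ := by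
    exact (hGc.comp (by continuity)).inner continuous_const
  have hFTC := intervalIntegral.integral_eq_sub_of_hasDerivAt
    (f := fun t : ℝ => g (a + t • v)) (f' := fun t : ℝ => ⟪Gr (a + t • v), v⟫)
    (a := 0) (b := 1) (fun t _ => hasDerivAt_line_jgs (hG _)) (hψc.intervalIntegrable 0 1)
  have hb1 : a + (1:ℝ) • v = b := by rw [one_smul, hv]; abel
  have hb0 : a + (0:ℝ) • v = a := by rw [zero_smul, add_zero]
  rw [hb1, hb0] at hFTC
  have hbound : ∫ t in (0:ℝ)..1, ⟪Gr (a + t • v), v⟫ ≤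
      ∫ t in (0:ℝ)..1, (⟪Gr a, v⟫ + L * t * ‖v‖ ^ 2) := by
    apply intervalIntegral.integral_mono_on zero_le_one
      (hψc.intervalIntegrable 0 1)
      ((by continuity : Continuous fun t : ℝ => ⟪Gr a, v⟫ + L * t * ‖v‖ ^ 2).intervalIntegrable 0 1)
    intro t ht
    have h1 : ⟪Gr (a + t • v), v⟫ - ⟪Gr a, v⟫ = ⟪Gr (a + t • v) - Gr a, v⟫ := by
      rw [inner_sub_left]
    have h2 : ⟪Gr (a + t • v) - Gr a, v⟫ ≤ ‖Gr (a + t • v) - Gr a‖ * ‖v‖ :=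
      real_inner_le_norm _ _
    have h3 : ‖Gr (a + t • v) - Gr a‖ ≤ L * ‖t • v‖ := by
      have := hL (a + t • v) a
      simpa using this
    have h5 := mul_le_mul_of_nonneg_right h3 (norm_nonneg v)
    rw [norm_smul, Real.norm_eq_abs, abs_of_nonneg ht.1] at h5
    nlinarith [h5]
  have h6 : ∫ _t in (0:ℝ)..1, ⟪Gr a, v⟫ = ⟪Gr a, v⟫ := by simp
  have h7 : ∫ t in (0:ℝ)..1, L * t * ‖v‖ ^ 2 = L / 2 * ‖v‖ ^ 2 := by
    have heq : (fun t : ℝ => L * t * ‖v‖ ^ 2) = fun t : ℝ => (L * ‖v‖ ^ 2) * t := by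
      ext t; ring
    rw [heq, intervalIntegral.integral_const_mul, integral_id]
    ring
  rw [intervalIntegral.integral_add (intervalIntegrable_const)
      ((by continuity : Continuous fun t : ℝ => L * t * ‖v‖ ^ 2).intervalIntegrable 0 1),
      h6, h7] at hbound
  linarith [hFTC ▸ hbound]

end AuxJGS

/-- Quasi-Fejér sequences with summable errors converge. -/
lemma quasiFejer_jgs {a e : ℕ → ℝ} (ha : ∀ k, 0 ≤ a k) (he : ∀ k, 0 ≤ e k)
    (hsum : Summable e) (hrec : ∀ k, a (k + 1) ≤ a k + e k) :
    ∃ l : ℝ, Tendsto a atTop (𝓝 l) := by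
  set E : ℕ → ℝ := fun k => ∑' j, e (j + k) with hE
  have hEsum : ∀ k, Summable fun j => e (j + k) := fun k => (summable_nat_add_iff k).2 hsum
  have hsplit : ∀ k, E k = e k + E (k + 1) := by
    intro k
    have hs2 : Summable fun j : ℕ => e (j + 1 + k) :=
      ((summable_nat_add_iff (k+1)).2 hsum).congr (fun j => by congr 1; omega)
    have h0 := tsum_eq_zero_add' (f := fun j => e (j + k)) hs2
    simp only [zero_add] at h0
    show (∑' j, e (j + k)) = e k + ∑' j, e (j + (k+1))
    rw [h0]
    congr 1
    apply tsum_congr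
    intro j
    congr 1
    omega
  have hanti : Antitone (fun k => a k + E k) := by
    apply antitone_nat_of_succ_le
    intro k
    have h1 := hrec k
    have h2 := hsplit k
    show a (k+1) + E (k+1) ≤ a k + E k
    linarith
  have hEnn : ∀ k, 0 ≤ E k := fun k => tsum_nonneg (fun j => he _)
  have hbdd : BddBelow (Set.range fun k => a k + E k) := by
    refine ⟨0, ?_⟩
    rintro r ⟨k, rfl⟩
    exact add_nonneg (ha k) (hEnn k)
  have hconv := tendsto_atTop_ciInf hanti hbdd
  have hE0 : Tendsto E atTop (𝓝 0) := tendsto_sum_nat_add e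
  refine ⟨⨅ k, (a k + E k), ?_⟩
  have h3 := hconv.sub hE0
  simp only [add_sub_cancel_right, sub_zero] at h3
  exact h3


/-- Convex optimization with strongly convex learning: diminishing steplengths for the
optimization problem and a constant learning steplength yield convergence of `x_k` to a
point of `X*` and of `θ_k` to `θ*`. -/
theorem stmt_4
    {n m : ℕ}
    (X : Set (EuclideanSpace ℝ (Fin n))) (Θ : Set (EuclideanSpace ℝ (Fin m)))
    (hXne : X.Nonempty) (hXcp : IsCompact X) (hXcv : Convex ℝ X)
    (hΘne : Θ.Nonempty) (hΘcp : IsCompact Θ) (hΘcv : Convex ℝ Θ)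
    (f : EuclideanSpace ℝ (Fin n) → EuclideanSpace ℝ (Fin m) → ℝ)
    (g : EuclideanSpace ℝ (Fin m) → ℝ)
    (gradf : EuclideanSpace ℝ (Fin n) → EuclideanSpace ℝ (Fin m) → EuclideanSpace ℝ (Fin n))
    (gradg : EuclideanSpace ℝ (Fin m) → EuclideanSpace ℝ (Fin m))
    -- continuous differentiability and convexity of f in x
    (hfdiff : ∀ θ' ∈ Θ, ∀ x', HasGradientAt (fun y => f y θ') (gradf x' θ') x')
    (hfgradcont : ∀ θ' ∈ Θ, Continuous (fun x' => gradf x' θ'))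
    (hfconv : ∀ θ' ∈ Θ, ConvexOn ℝ X (fun y => f y θ'))
    -- continuous differentiability and strong convexity of g
    (hgdiff : ∀ ϑ, HasGradientAt g (gradg ϑ) ϑ)
    (hggradcont : Continuous gradg)
    (Gg ηg : ℝ) (hGg : 0 < Gg) (hηg : 0 < ηg)
    (hstrg : StrongConvexOn Θ ηg g)
    (hLipg : ∀ θ1 θ2, ‖gradg θ1 - gradg θ2‖ ≤ Gg * ‖θ1 - θ2‖)
    -- the minimizer of g and nonemptiness of X*
    (θs : EuclideanSpace ℝ (Fin m)) (hθsΘ : θs ∈ Θ) (hθsmin : ∀ ϑ ∈ Θ, g θs ≤ g ϑ)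
    (hXstar : ∃ y ∈ X, ∀ z ∈ X, f y θs ≤ f z θs)
    -- Lipschitzian assumptions on the gradient map of f
    (Gfx Gfθ : ℝ) (hGfx : 0 < Gfx)
    (hLipfx : ∀ θ' ∈ Θ, ∀ x1 ∈ X, ∀ x2 ∈ X,
      ‖gradf x1 θ' - gradf x2 θ'‖ ≤ Gfx * ‖x1 - x2‖)
    (hLipfθ : ∀ y ∈ X, ∀ θ1 ∈ Θ, ∀ θ2 ∈ Θ,
      ‖gradf y θ1 - gradf y θ2‖ ≤ Gfθ * ‖θ1 - θ2‖)
    -- Euclidean projections onto X and Θ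
    (PX : EuclideanSpace ℝ (Fin n) → EuclideanSpace ℝ (Fin n))
    (PΘ : EuclideanSpace ℝ (Fin m) → EuclideanSpace ℝ (Fin m))
    (hPX : ∀ y, PX y ∈ X ∧ ∀ z ∈ X, ‖y - PX y‖ ≤ ‖y - z‖)
    (hPΘ : ∀ y, PΘ y ∈ Θ ∧ ∀ z ∈ Θ, ‖y - PΘ y‖ ≤ ‖y - z‖)
    -- diminishing optimization steplengths and a constant learning steplength
    (γf : ℕ → ℝ) (hγfnn : ∀ k, 0 ≤ γf k)
    (hγfdim : Tendsto γf atTop (𝓝 0))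
    (hγfdiv : Tendsto (fun K => ∑ k ∈ Finset.range K, γf k) atTop atTop)
    (hγfsq : Summable (fun k => (γf k) ^ 2))
    (γg : ℝ) (hγg0 : 0 < γg) (hγg2 : γg < 2 / Gg)
    -- the joint gradient scheme
    (x : ℕ → EuclideanSpace ℝ (Fin n)) (θ : ℕ → EuclideanSpace ℝ (Fin m))
    (hx0 : x 0 ∈ X) (hθ0 : θ 0 ∈ Θ)
    (hxit : ∀ k, x (k + 1) = PX (x k - γf k • gradf (x k) (θ k)))
    (hθit : ∀ k, θ (k + 1) = PΘ (θ k - γg • gradg (θ k))) :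
    (∃ xl ∈ X, (∀ z ∈ X, f xl θs ≤ f z θs) ∧ Tendsto x atTop (𝓝 xl)) ∧
      Tendsto θ atTop (𝓝 θs) := by
  obtain ⟨xs, hxsX, hxsmin⟩ := hXstar
  -- membership of the iterates
  have hθmem : ∀ k, θ k ∈ Θ := by
    intro k
    cases k with
    | zero => exact hθ0
    | succ k => rw [hθit k]; exact (hPΘ _).1
  have hxmem : ∀ k, x k ∈ X := by
    intro k
    cases k with
    | zero => exact hx0
    | succ k => rw [hxit k]; exact (hPX _).1
  have hVIΘ := projVI_jgs hΘcv hPΘ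
  have hgVI : ∀ w ∈ Θ, 0 ≤ ⟪gradg θs, w - θs⟫ :=
    min_VI_jgs hΘcv hθsΘ hθsmin (hgdiff θs)
  -- step residuals ρ and distances sn
  set ρ : ℕ → ℝ := fun k => ‖θ (k + 1) - θ k‖ with hρdef
  set sn : ℕ → ℝ := fun k => ‖θ k - θs‖ with hsndef
  -- the fixed-point residual inequality
  have hρVI : ∀ k, ρ k ^ 2 ≤ γg * ⟪gradg (θ k), θ k - θ (k + 1)⟫ := by
    intro k
    have h := hVIΘ (θ k - γg • gradg (θ k)) (θ k) (hθmem k)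
    rw [← hθit k] at h
    have hrw : θ k - γg • gradg (θ k) - θ (k + 1)
        = (θ k - θ (k + 1)) - γg • gradg (θ k) := by abel
    rw [hrw, inner_sub_left, real_inner_smul_left, real_inner_self_eq_norm_sq] at h
    have hnrm : ‖θ k - θ (k + 1)‖ = ρ k := by rw [hρdef]; exact norm_sub_rev _ _
    rw [hnrm] at h
    linarith
  -- descent inequality and summability of ρ²
  have hcpos : 0 < 1 / γg - Gg / 2 := by
    have h2 : γg * Gg < 2 := (lt_div_iff₀ hGg).1 hγg2
    rw [sub_pos, div_lt_div_iff₀ two_pos hγg0]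
    nlinarith
  have hdesc : ∀ k, g (θ (k + 1)) + (1 / γg - Gg / 2) * ρ k ^ 2 ≤ g (θ k) := by
    intro k
    have hd := descent_lemma_jgs hgdiff hggradcont hLipg (θ k) (θ (k + 1))
    have hρk := hρVI k
    have hneg : ⟪gradg (θ k), θ (k + 1) - θ k⟫ = -⟪gradg (θ k), θ k - θ (k + 1)⟫ := by
      rw [← inner_neg_right]; congr 1; abel
    rw [hneg] at hd
    have hρn : ‖θ (k + 1) - θ k‖ = ρ k := rfl
    rw [hρn] at hd
    have h3 : ρ k ^ 2 / γg ≤ ⟪gradg (θ k), θ k - θ (k + 1)⟫ := by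
      rw [div_le_iff₀ hγg0]; linarith [hρk]
    have h4 : (1 / γg) * ρ k ^ 2 = ρ k ^ 2 / γg := by ring
    linarith [hd, h3]
  have hρsum : Summable (fun k => ρ k ^ 2) := by
    set c := 1 / γg - Gg / 2 with hc
    have htel : ∀ K, g (θ K) + c * ∑ k ∈ Finset.range K, ρ k ^ 2 ≤ g (θ 0) := by
      intro K
      induction K with
      | zero => simp
      | succ K ih =>
        rw [Finset.sum_range_succ]
        have := hdesc K
        nlinarith
    apply summable_of_sum_range_le (c := (g (θ 0) - g θs) / c) (fun k => sq_nonneg _)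
    intro K
    rw [le_div_iff₀ hcpos]
    have h5 := htel K
    have h6 := hθsmin (θ K) (hθmem K)
    nlinarith
  -- the error bound: sn k ≤ Cθ * ρ k
  set Cθ : ℝ := (1 + γg * Gg) / (γg * ηg) with hCθdef
  have hCθnn : 0 ≤ Cθ := by positivity
  have herr : ∀ k, sn k ≤ Cθ * ρ k := by
    intro k
    have VI1 := hVIΘ (θ k - γg • gradg (θ k)) θs hθsΘ
    rw [← hθit k] at VI1
    have VI2 := hgVI (θ (k + 1)) (hθmem (k + 1))
    have mono := strong_mono_jgs hstrg (hθmem k) hθsΘ (hgdiff (θ k)) (hgdiff θs)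
    have lip := hLipg (θ k) θs
    -- abbreviations
    set u := θ k - θs with hu
    set w := θ k - θ (k + 1) with hw
    set d := gradg (θ k) - gradg θs with hd
    have hwρ : ‖w‖ = ρ k := by rw [hw]; exact norm_sub_rev _ _
    have husn : ‖u‖ = sn k := rfl
    -- rewrite VI1
    have hrw1 : θ k - γg • gradg (θ k) - θ (k + 1) = w - γg • gradg (θ k) := by
      rw [hw]; abel
    have hrw2 : θs - θ (k + 1) = w - u := by rw [hw, hu]; abel
    rw [hrw1, hrw2, inner_sub_left, real_inner_smul_left] at VI1
    -- rewrite VI2 : 0 ≤ ⟪gradg θs, θ (k+1) - θs⟫ and θ(k+1) - θs = u - w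
    have hrw3 : θ (k + 1) - θs = u - w := by rw [hw, hu]; abel
    rw [hrw3] at VI2
    have VI2' : ⟪gradg θs, w - u⟫ ≤ 0 := by
      have : ⟪gradg θs, u - w⟫ = -⟪gradg θs, w - u⟫ := by
        rw [← inner_neg_right]; congr 1; abel
      linarith [VI2, this.le, this.ge]
    -- combine
    have hcomb : ⟪w, w - u⟫ ≤ γg * ⟪d, w - u⟫ := by
      have : ⟪d, w - u⟫ = ⟪gradg (θ k), w - u⟫ - ⟪gradg θs, w - u⟫ := by
        rw [hd, inner_sub_left]
      nlinarith [VI1, VI2', this.le, this.ge, hγg0.le]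
    have hsplit1 : ⟪w, w - u⟫ = ‖w‖ ^ 2 - ⟪w, u⟫ := by
      rw [inner_sub_right, real_inner_self_eq_norm_sq]
    have hsplit2 : ⟪d, w - u⟫ = ⟪d, w⟫ - ⟪d, u⟫ := by rw [inner_sub_right]
    have hdu : ηg * ‖u‖ ^ 2 ≤ ⟪d, u⟫ := mono
    have hdw : ⟪d, w⟫ ≤ Gg * ‖u‖ * ‖w‖ := by
      have h1 : ⟪d, w⟫ ≤ ‖d‖ * ‖w‖ := real_inner_le_norm _ _
      have h2 : ‖d‖ * ‖w‖ ≤ (Gg * ‖u‖) * ‖w‖ :=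
        mul_le_mul_of_nonneg_right lip (norm_nonneg _)
      linarith
    have hwu : ⟪w, u⟫ ≤ ‖w‖ * ‖u‖ := real_inner_le_norm _ _
    have hkey : γg * ηg * ‖u‖ ^ 2 ≤ (1 + γg * Gg) * (‖u‖ * ‖w‖) := by
      nlinarith [hcomb, hsplit1, hsplit2, hdu, hdw, hwu, sq_nonneg ‖w‖, hγg0.le,
        mul_le_mul_of_nonneg_left hdu hγg0.le, mul_le_mul_of_nonneg_left hdw hγg0.le]
    -- conclude
    rcases eq_or_lt_of_le (norm_nonneg u) with h0 | hpos
    · rw [← husn, ← h0]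
      positivity
    · have h7 : γg * ηg * ‖u‖ ≤ (1 + γg * Gg) * ‖w‖ := by
        have hsq : ‖u‖ ^ 2 = ‖u‖ * ‖u‖ := pow_two _
        nlinarith [hkey, hpos]
      rw [← husn, ← hwρ, hCθdef]
      rw [div_mul_eq_mul_div, le_div_iff₀ (by positivity)]
      linarith
  -- ρ → 0 and θ → θs
  have hρ0 : Tendsto ρ atTop (𝓝 0) := by
    have h2 := hρsum.tendsto_atTop_zero
    have h3 := h2.sqrt
    rw [Real.sqrt_zero] at h3
    refine h3.congr fun k => ?_
    exact Real.sqrt_sq (norm_nonneg _)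
  have hsn0 : Tendsto sn atTop (𝓝 0) := by
    apply squeeze_zero (fun k => norm_nonneg _) herr
    simpa using hρ0.const_mul Cθ
  have hθtend : Tendsto θ atTop (𝓝 θs) := by
    rw [tendsto_iff_norm_sub_tendsto_zero]
    exact hsn0
  -- summability of sn²
  have hsnsq : Summable (fun k => sn k ^ 2) := by
    apply Summable.of_nonneg_of_le (fun k => sq_nonneg _) (fun k => ?_)
      (hρsum.mul_left (Cθ ^ 2))
    have := herr k
    nlinarith [norm_nonneg (θ k - θs), norm_nonneg (θ (k+1) - θ k), hCθnn]
  -- x part: constants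
  obtain ⟨DX, hDX⟩ := Metric.isBounded_iff.1 hXcp.isBounded
  obtain ⟨DT, hDT⟩ := Metric.isBounded_iff.1 hΘcp.isBounded
  have hDXnn : 0 ≤ DX := le_trans dist_nonneg (hDX hxsX hxsX)
  have hnX : ∀ a ∈ X, ∀ b ∈ X, ‖a - b‖ ≤ DX := fun a ha b hb => by
    rw [← dist_eq_norm]; exact hDX ha hb
  have hnT : ∀ a ∈ Θ, ∀ b ∈ Θ, ‖a - b‖ ≤ DT := fun a ha b hb => by
    rw [← dist_eq_norm]; exact hDT ha hb
  obtain ⟨xM, hxMX, hxMmax⟩ := hXcp.exists_isMaxOn hXne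
    ((continuous_norm.comp (hfgradcont θs hθsΘ)).continuousOn :
      ContinuousOn (fun y => ‖gradf y θs‖) X)
  set M : ℝ := ‖gradf xM θs‖ with hMdef
  set C : ℝ := M + max Gfθ 0 * DT with hCdef
  have hMnn : 0 ≤ M := norm_nonneg _
  have hDTnn : 0 ≤ DT := le_trans dist_nonneg (hDT hθsΘ hθsΘ)
  have hCnn : 0 ≤ C := by
    have : (0:ℝ) ≤ max Gfθ 0 * DT := mul_nonneg (le_max_right _ _) hDTnn
    rw [hCdef]; linarith
  have hdbound : ∀ k, ‖gradf (x k) (θ k)‖ ≤ C := by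
    intro k
    have h1 : gradf (x k) (θ k)
        = gradf (x k) θs + (gradf (x k) (θ k) - gradf (x k) θs) := by abel
    have h2 : ‖gradf (x k) (θ k)‖
        ≤ ‖gradf (x k) θs‖ + ‖gradf (x k) (θ k) - gradf (x k) θs‖ := by
      nth_rewrite 1 [h1]; exact norm_add_le _ _
    have h3 : ‖gradf (x k) θs‖ ≤ M := hxMmax (hxmem k)
    have h4 : ‖gradf (x k) (θ k) - gradf (x k) θs‖ ≤ Gfθ * sn k :=
      hLipfθ (x k) (hxmem k) (θ k) (hθmem k) θs hθsΘ
    have h5 : Gfθ * sn k ≤ max Gfθ 0 * sn k :=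
      mul_le_mul_of_nonneg_right (le_max_left _ _) (norm_nonneg _)
    have h6 : max Gfθ 0 * sn k ≤ max Gfθ 0 * DT :=
      mul_le_mul_of_nonneg_left (hnT (θ k) (hθmem k) θs hθsΘ) (le_max_right _ _)
    rw [hCdef]; linarith
  -- error sequence
  have hGsnn : ∀ k, 0 ≤ Gfθ * sn k := fun k =>
    le_trans (norm_nonneg _) (hLipfθ xs hxsX (θ k) (hθmem k) θs hθsΘ)
  set e : ℕ → ℝ := fun k => 2 * γf k * (Gfθ * sn k) * DX + γf k ^ 2 * C ^ 2 with hedef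
  have henn : ∀ k, 0 ≤ e k := by
    intro k
    have h1 := hGsnn k
    have h2 := hγfnn k
    have : (0:ℝ) ≤ 2 * γf k * (Gfθ * sn k) * DX := by positivity
    have : (0:ℝ) ≤ γf k ^ 2 * C ^ 2 := by positivity
    rw [hedef]; dsimp only; linarith
  have hesum : Summable e := by
    apply Summable.of_nonneg_of_le henn (fun k => ?_)
      (((hγfsq.add (hsnsq.mul_left (Gfθ ^ 2))).mul_left DX).add (hγfsq.mul_left (C ^ 2)))
    show e k ≤ DX * (γf k ^ 2 + Gfθ ^ 2 * sn k ^ 2) + C ^ 2 * γf k ^ 2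
    rw [hedef]
    dsimp only
    nlinarith [mul_nonneg hDXnn (sq_nonneg (γf k - Gfθ * sn k))]
  -- the key recursion
  have hrecur : ∀ z ∈ X, ∀ k, ‖x (k + 1) - z‖ ^ 2
      ≤ ‖x k - z‖ ^ 2 - 2 * γf k * (f (x k) θs - f z θs) + e k := by
    intro z hz k
    set d := gradf (x k) (θ k) with hddef
    have h1 : ‖x (k + 1) - z‖ ^ 2 ≤ ‖x k - γf k • d - z‖ ^ 2 := by
      rw [hxit k]; exact proj_sq_le_jgs hXcv hPX _ hz
    have hexp : ‖x k - γf k • d - z‖ ^ 2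
        = ‖x k - z‖ ^ 2 - 2 * γf k * ⟪d, x k - z⟫ + γf k ^ 2 * ‖d‖ ^ 2 := by
      have hab : x k - γf k • d - z = (x k - z) - γf k • d := by abel
      rw [hab, norm_sub_sq_real, real_inner_smul_right, norm_smul, Real.norm_eq_abs,
        mul_pow, sq_abs, real_inner_comm]
      ring
    have hconv := convex_grad_ineq_jgs (hfconv θs hθsΘ) (hxmem k) hz (hfdiff θs hθsΘ (x k))
    have hie : ⟪gradf (x k) θs, z - x k⟫ = -⟪gradf (x k) θs, x k - z⟫ := by
      rw [← inner_neg_right]; congr 1; abel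
    have hsplit : ⟪d, x k - z⟫
        = ⟪gradf (x k) θs, x k - z⟫ + ⟪d - gradf (x k) θs, x k - z⟫ := by
      rw [← inner_add_left]; congr 1; abel
    have hpert : |⟪d - gradf (x k) θs, x k - z⟫| ≤ (Gfθ * sn k) * DX := by
      refine le_trans (abs_real_inner_le_norm _ _) ?_
      exact mul_le_mul (hLipfθ (x k) (hxmem k) (θ k) (hθmem k) θs hθsΘ)
        (hnX (x k) (hxmem k) z hz) (norm_nonneg _) (hGsnn k)
    have hd2 : ‖d‖ ^ 2 ≤ C ^ 2 := by
      have := hdbound k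
      nlinarith [norm_nonneg d]
    have hlow : (f (x k) θs - f z θs) - (Gfθ * sn k) * DX ≤ ⟪d, x k - z⟫ := by
      rw [hsplit]
      have habs := abs_le.1 hpert
      linarith [hconv, hie.le, hie.ge, habs.1]
    have hγ := hγfnn k
    have hm1 := mul_le_mul_of_nonneg_left hlow hγ
    have hm2 := mul_le_mul_of_nonneg_left hd2 (sq_nonneg (γf k))
    rw [hedef]
    dsimp only
    nlinarith [h1, hexp.le, hexp.ge, hm1, hm2]
  -- summability of γf * δ
  have hδnn : ∀ k, 0 ≤ f (x k) θs - f xs θs := fun k =>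
    sub_nonneg.2 (hxsmin _ (hxmem k))
  have hγδsum : Summable (fun k => γf k * (f (x k) θs - f xs θs)) := by
    have htel : ∀ K, ‖x K - xs‖ ^ 2
        + ∑ k ∈ Finset.range K, 2 * (γf k * (f (x k) θs - f xs θs))
        ≤ ‖x 0 - xs‖ ^ 2 + ∑ k ∈ Finset.range K, e k := by
      intro K
      induction K with
      | zero => simp
      | succ K ih =>
        rw [Finset.sum_range_succ, Finset.sum_range_succ]
        have := hrecur xs hxsX K
        nlinarith
    apply summable_of_sum_range_le (c := (‖x 0 - xs‖ ^ 2 + ∑' j, e j) / 2)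
      (fun k => mul_nonneg (hγfnn k) (hδnn k))
    intro K
    have h5 := htel K
    have h6 : ∑ k ∈ Finset.range K, e k ≤ ∑' j, e j :=
      Summable.sum_le_tsum (Finset.range K) (fun i _ => henn i) hesum
    have h7 : ∑ k ∈ Finset.range K, 2 * (γf k * (f (x k) θs - f xs θs))
        = 2 * ∑ k ∈ Finset.range K, γf k * (f (x k) θs - f xs θs) := by
      rw [Finset.mul_sum]
    nlinarith [sq_nonneg ‖x K - xs‖]
  -- frequently small optimality gap
  have hfreq : ∀ N : ℕ, ∃ᶠ k in atTop, f (x k) θs - f xs θs < 1 / (N + 1) := by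
    intro N
    by_contra hcon
    rw [not_frequently] at hcon
    obtain ⟨K0, hK0⟩ := eventually_atTop.1 hcon
    have hsumγ : Summable (fun k => γf (k + K0)) := by
      apply Summable.of_nonneg_of_le (fun k => hγfnn _) (fun k => ?_)
        (((summable_nat_add_iff K0).2 hγδsum).mul_left ((N:ℝ) + 1))
      show γf (k + K0) ≤ ((N:ℝ) + 1) * (γf (k + K0) * (f (x (k + K0)) θs - f xs θs))
      have hge : ¬(f (x (k + K0)) θs - f xs θs < 1 / (N + 1)) := hK0 _ (Nat.le_add_left _ _)
      push_neg at hge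
      have hN1 : (0:ℝ) < (N:ℝ) + 1 := by positivity
      have h8 : 1 ≤ ((N:ℝ) + 1) * (f (x (k + K0)) θs - f xs θs) := by
        rw [div_le_iff₀ hN1] at hge
        linarith
      nlinarith [hγfnn (k + K0)]
    have hγsum : Summable γf := (summable_nat_add_iff K0).1 hsumγ
    exact (not_tendsto_atTop_of_tendsto_nhds hγsum.hasSum.tendsto_sum_nat) hγfdiv
  -- extraction of a subsequence with vanishing gap
  obtain ⟨φ, hφmono, hφ⟩ := Filter.extraction_forall_of_frequently hfreq
  have hδφ : Tendsto (fun N => f (x (φ N)) θs - f xs θs) atTop (𝓝 0) := by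
    apply squeeze_zero (fun N => hδnn _) (fun N => (hφ N).le)
    exact_mod_cast tendsto_one_div_add_atTop_nhds_zero_nat (𝕜 := ℝ)
  obtain ⟨xl, hxlX, ψ, hψmono, hxlim⟩ := hXcp.tendsto_subseq (fun N => hxmem (φ N))
  have hFcont : Continuous (fun y => f y θs) :=
    continuous_iff_continuousAt.2 fun y => (hfdiff θs hθsΘ y).continuousAt
  have hδψl : Tendsto (fun N => f (x (φ (ψ N))) θs - f xs θs) atTop
      (𝓝 (f xl θs - f xs θs)) := by
    have := (hFcont.tendsto xl).comp hxlim
    exact this.sub_const _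
  have hδψ0 : Tendsto (fun N => f (x (φ (ψ N))) θs - f xs θs) atTop (𝓝 0) :=
    hδφ.comp hψmono.tendsto_atTop
  have hfeq : f xl θs = f xs θs := by
    have := tendsto_nhds_unique hδψl hδψ0
    linarith
  have hxlmin : ∀ z ∈ X, f xl θs ≤ f z θs := fun z hz => by
    rw [hfeq]; exact hxsmin z hz
  -- quasi-Fejér convergence of ‖x k - xl‖²
  have hafej : ∀ k, ‖x (k + 1) - xl‖ ^ 2 ≤ ‖x k - xl‖ ^ 2 + e k := by
    intro k
    have h9 := hrecur xl hxlX k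
    have hδ := sub_nonneg.2 (hxlmin _ (hxmem k))
    nlinarith [mul_nonneg (hγfnn k) hδ]
  obtain ⟨l, hl⟩ := quasiFejer_jgs (a := fun k => ‖x k - xl‖ ^ 2) (fun k => sq_nonneg _) henn hesum hafej
  have hsub0 : Tendsto (fun N => ‖x (φ (ψ N)) - xl‖ ^ 2) atTop (𝓝 0) := by
    have h10 : Tendsto (fun N => ‖x (φ (ψ N)) - xl‖) atTop (𝓝 0) := by
      rw [← tendsto_iff_norm_sub_tendsto_zero]
      exact hxlim
    have := h10.pow 2
    simpa using this
  have hsubl : Tendsto (fun N => ‖x (φ (ψ N)) - xl‖ ^ 2) atTop (𝓝 l) :=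
    hl.comp ((hφmono.comp hψmono).tendsto_atTop)
  have hl0 : l = 0 := tendsto_nhds_unique hsubl hsub0
  rw [hl0] at hl
  have hxtend : Tendsto x atTop (𝓝 xl) := by
    rw [tendsto_iff_norm_sub_tendsto_zero]
    have h11 := hl.sqrt
    rw [Real.sqrt_zero] at h11
    refine h11.congr fun k => ?_
    exact Real.sqrt_sq (norm_nonneg _)
  exact ⟨⟨xl, hxlX, hxlmin, hxtend⟩, hθtend⟩
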